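/- There is a constant c > 0 such that for every M ∈ ℕ, M ≥ 1, the space L_∞^M satisfies the type-2 inequality with constant c·(log(M+1))^{1/2} (logarithm to base 2); that is, for every m ∈ ℕ and all x_1,…,x_m ∈ ℝ^M, 2^{−m} Σ_{ε∈{−1,1}^m} ‖Σ_{i=1}^m ε_i x_i‖_{L_∞^M}^2 ≤ c^2 · log(M+1) · Σ_{i=1}^m ‖x_i‖_{L_∞^M}^2. -/

import Mathlib

/-- The `L_∞^M` norm on `ℝ^M`: `‖x‖ = max_i |x i|`. -/
noncomputable def linfNorm (M : ℕ) (x : Fin M → ℝ) : ℝ :=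
  ⨆ i, |x i|

open Finset Real

lemma abs_le_linf' {M : ℕ} (x : Fin M → ℝ) (j : Fin M) : |x j| ≤ linfNorm M x :=
  le_ciSup (f := fun i => |x i|) (Set.Finite.bddAbove (Set.finite_range _)) j

lemma linf_nonneg' {M : ℕ} (hM : 1 ≤ M) (x : Fin M → ℝ) : 0 ≤ linfNorm M x :=
  le_trans (abs_nonneg _) (abs_le_linf' x ⟨0, hM⟩)

lemma exists_linf_eq' {M : ℕ} (hM : 1 ≤ M) (x : Fin M → ℝ) :
    ∃ j, linfNorm M x = |x j| := by
  have : Nonempty (Fin M) := ⟨⟨0, hM⟩⟩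
  obtain ⟨j, hj⟩ := Finite.exists_max (fun i => |x i|)
  exact ⟨j, le_antisymm (ciSup_le hj) (abs_le_linf' x j)⟩

lemma sum_vec_apply {M m : ℕ} (x : Fin m → Fin M → ℝ) (ε : Fin m → Bool) (j : Fin M) :
    (∑ i, if ε i then x i else -x i) j = ∑ i, (if ε i then x i j else -(x i j)) := by
  rw [Finset.sum_apply]
  exact Finset.sum_congr rfl (fun i _ => by split <;> simp)

lemma mgf_bound' {m : ℕ} (a : Fin m → ℝ) (l : ℝ) :
    ∑ ε : Fin m → Bool, Real.exp (l * ∑ i, (if ε i then a i else -a i))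
      ≤ 2 ^ m * Real.exp (l ^ 2 * (∑ i, a i ^ 2) / 2) := by
  have key : ∀ ε : Fin m → Bool, Real.exp (l * ∑ i, (if ε i then a i else -a i))
      = ∏ i, Real.exp (l * (if ε i then a i else -a i)) := by
    intro ε
    rw [Finset.mul_sum, Real.exp_sum]
  simp_rw [key]
  rw [← Fintype.prod_sum (fun i (b : Bool) => Real.exp (l * (if b then a i else -a i)))]
  have h2 : (2:ℝ) ^ m * Real.exp (l ^ 2 * (∑ i, a i ^ 2) / 2)
      = ∏ i : Fin m, (2 * Real.exp ((l * a i) ^ 2 / 2)) := by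
    rw [Finset.prod_mul_distrib, Finset.prod_const, ← Real.exp_sum, Finset.card_univ,
      Fintype.card_fin]
    congr 2
    simp_rw [mul_pow]
    rw [← Finset.sum_div, ← Finset.mul_sum]
  rw [h2]
  apply Finset.prod_le_prod
  · intro i _
    positivity
  · intro i _
    rw [Fintype.sum_bool]
    simp only [if_true, Bool.false_eq_true, if_false]
    have : Real.exp (l * a i) + Real.exp (-(l * a i)) = 2 * Real.cosh (l * a i) := by
      rw [Real.cosh_eq]; ring_nf
    rw [show l * -a i = -(l * a i) by ring, this]
    have := Real.cosh_le_exp_half_sq (l * a i)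
    linarith

lemma exp_quad' {u : ℝ} (hu : 0 ≤ u) : 1 + u + u ^ 2 / 2 ≤ Real.exp u := by
  have h := Real.sum_le_exp_of_nonneg hu 3
  have h3 : ∑ i ∈ Finset.range 3, u ^ i / (Nat.factorial i) = 1 + u + u ^ 2 / 2 := by
    norm_num [Finset.sum_range_succ, Nat.factorial]
  rw [h3] at h
  exact h

lemma point_bound' (w t l : ℝ) (hw : 0 ≤ w) (hl : 0 < l) (ht : 0 ≤ t)
    (h1 : 1 ≤ l * Real.sqrt t) :
    w ^ 2 ≤ t + (2 * Real.sqrt t / l) * Real.exp (l * w - l * Real.sqrt t) := by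
  set r := Real.sqrt t with hr
  have hrnn : 0 ≤ r := Real.sqrt_nonneg t
  have hr2 : r ^ 2 = t := Real.sq_sqrt ht
  rcases le_or_gt w r with h | h
  · have h5 : w ^ 2 ≤ t := by nlinarith
    have : 0 ≤ (2 * r / l) * Real.exp (l * w - l * r) := by positivity
    linarith
  · set u := w - r with hu
    have hupos : 0 < u := by simp [hu]; linarith
    have hq : 1 + l * u + (l * u) ^ 2 / 2 ≤ Real.exp (l * u) :=
      exp_quad' (mul_nonneg hl.le hupos.le)
    have hrw : l * w - l * r = l * u := by ring
    rw [hrw]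
    have hru : w = u + r := by ring
    have key : w ^ 2 - t ≤ (2 * r / l) * (1 + l * u + (l * u) ^ 2 / 2) := by
      have expand : (2 * r / l) * (1 + l * u + (l * u) ^ 2 / 2)
          = 2 * r / l + 2 * r * u + r * l * u ^ 2 := by
        field_simp
      rw [expand]
      have h1' : u ^ 2 ≤ r * l * u ^ 2 := by nlinarith
      have heq : w ^ 2 - t = u ^ 2 + 2 * r * u := by rw [hru, ← hr2]; ring
      have hpos : 0 ≤ 2 * r / l := by positivity
      nlinarith [h1', hpos, heq]
    have hmul : (2 * r / l) * (1 + l * u + (l * u) ^ 2 / 2) ≤ (2 * r / l) * Real.exp (l * u) :=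
      mul_le_mul_of_nonneg_left hq (by positivity)
    linarith

set_option maxHeartbeats 1000000 in
/-- There is a constant `c > 0` such that every `L_∞^M` (`M ≥ 1`)
satisfies the type-2 inequality with constant `c·(log₂(M+1))^(1/2)`:
for every `m` and all `x₁,…,x_m ∈ ℝ^M`,
`2^(-m) ∑_{ε ∈ {−1,1}^m} ‖∑ i, ε i • x i‖_{L_∞^M}^2
  ≤ c^2 · log₂(M+1) · ∑ i, ‖x i‖_{L_∞^M}^2`. -/
theorem linf_type_2 :
    ∃ c : ℝ, 0 < c ∧
      ∀ (M : ℕ), 1 ≤ M → ∀ (m : ℕ) (x : Fin m → Fin M → ℝ),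
        ((2 : ℝ) ^ m)⁻¹ *
            ∑ ε : Fin m → Bool,
              linfNorm M (∑ i, if ε i then x i else -x i) ^ 2
          ≤ c ^ 2 * Real.logb 2 (M + 1) * ∑ i, linfNorm M (x i) ^ 2 := by
  refine ⟨4, by norm_num, ?_⟩
  intro M hM m x
  set S2 := ∑ i, linfNorm M (x i) ^ 2 with hS2def
  have hS2nn : 0 ≤ S2 := Finset.sum_nonneg (fun i _ => sq_nonneg _)
  have hlogMnn : 0 ≤ Real.logb 2 ((M : ℝ) + 1) := by
    apply Real.logb_nonneg (by norm_num)
    have : (1:ℝ) ≤ M := by exact_mod_cast hM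
    linarith
  by_cases h0 : S2 = 0
  · -- all x i = 0
    have hzero : ∀ ε : Fin m → Bool, linfNorm M (∑ i, if ε i then x i else -x i) = 0 := by
      intro ε
      have hterm : ∀ i : Fin m, linfNorm M (x i) ^ 2 = 0 := by
        intro i
        have := (Finset.sum_eq_zero_iff_of_nonneg
          (fun i _ => sq_nonneg (linfNorm M (x i)))).mp h0 i (Finset.mem_univ i)
        exact this
      have hx : ∀ i j, x i j = 0 := by
        intro i j
        have h1 : linfNorm M (x i) = 0 := by
          have := hterm i; nlinarith [this]
        have := abs_le_linf' (x i) j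
        rw [h1] at this
        exact abs_eq_zero.mp (le_antisymm this (abs_nonneg _))
      have : (∑ i, if ε i then x i else -x i) = (0 : Fin M → ℝ) := by
        funext j
        rw [sum_vec_apply]
        apply Finset.sum_eq_zero
        intro i _
        rw [hx i j]
        split <;> simp
      rw [this]
      obtain ⟨j, hj⟩ := exists_linf_eq' hM (0 : Fin M → ℝ)
      simpa using hj
    have : ∑ ε : Fin m → Bool, linfNorm M (∑ i, if ε i then x i else -x i) ^ 2 = 0 := by
      apply Finset.sum_eq_zero
      intro ε _
      rw [hzero ε]; ring
    rw [this, mul_zero, h0, mul_zero]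
  · have hS2pos : 0 < S2 := lt_of_le_of_ne hS2nn (Ne.symm h0)
    have hM1 : (1:ℝ) ≤ M := by exact_mod_cast hM
    set L := Real.log ((M:ℝ) + 1) with hLdef
    have hlog2pos : 0 < Real.log 2 := Real.log_pos one_lt_two
    have hlog2 : Real.log 2 ≤ L := by
      apply Real.log_le_log (by norm_num)
      linarith
    have hLpos : 0 < L := lt_of_lt_of_le hlog2pos hlog2
    have hexpL : Real.exp L = (M:ℝ) + 1 := Real.exp_log (by linarith)
    set sg := Real.sqrt S2 with hsgdef
    have hsg2 : sg ^ 2 = S2 := Real.sq_sqrt hS2nn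
    have hsgpos : 0 < sg := Real.sqrt_pos.mpr hS2pos
    set sL := Real.sqrt L with hsLdef
    have hsL2 : sL ^ 2 = L := Real.sq_sqrt hLpos.le
    have hsLpos : 0 < sL := Real.sqrt_pos.mpr hLpos
    set l := sL / sg with hldef
    have hlpos : 0 < l := div_pos hsLpos hsgpos
    set t := 4 * L * S2 with htdef
    have htnn : 0 ≤ t := by positivity
    have hrt : Real.sqrt t = 2 * sL * sg := by
      have h1 : (2 * sL * sg) ^ 2 = 4 * L * S2 := by
        rw [mul_pow, mul_pow, hsL2, hsg2]; ring
      rw [htdef, ← h1, Real.sqrt_sq (by positivity)]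
    have hlt : l * Real.sqrt t = 2 * L := by
      rw [hrt, hldef]
      field_simp
      linear_combination hsL2
    have hc : 2 * Real.sqrt t / l = 4 * S2 := by
      rw [hrt, hldef]
      have hsne : sg ≠ 0 := hsgpos.ne'
      have hsLne : sL ≠ 0 := hsLpos.ne'
      field_simp
      linear_combination 4 * hsg2
    have h1 : 1 ≤ l * Real.sqrt t := by
      rw [hlt]
      have := Real.log_two_gt_d9
      linarith
    have hl2 : l ^ 2 * S2 = L := by
      rw [hldef, div_pow, hsL2, hsg2, div_mul_cancel₀ _ hS2pos.ne']
    -- pointwise bound for each sign vector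
    have main : ∀ ε : Fin m → Bool,
        linfNorm M (∑ i, if ε i then x i else -x i) ^ 2
          ≤ t + 4 * S2 * Real.exp
              (l * linfNorm M (∑ i, if ε i then x i else -x i) - 2 * L) := by
      intro ε
      have hw := linf_nonneg' hM (∑ i, if ε i then x i else -x i)
      have hpb := point_bound' (linfNorm M (∑ i, if ε i then x i else -x i)) t l hw hlpos htnn h1
      rw [hc, hlt] at hpb
      exact hpb
    -- variance bound per coordinate
    have hsigj : ∀ j : Fin M, ∑ i, (x i j) ^ 2 ≤ S2 := by
      intro j
      apply Finset.sum_le_sum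
      intro i _
      calc (x i j) ^ 2 = |x i j| ^ 2 := (sq_abs _).symm
        _ ≤ linfNorm M (x i) ^ 2 :=
            pow_le_pow_left₀ (abs_nonneg _) (abs_le_linf' (x i) j) 2
    -- MGF bound specialized
    have hmge : ∀ a : Fin m → ℝ, (∑ i, a i ^ 2) ≤ S2 →
        ∑ ε : Fin m → Bool, Real.exp (l * ∑ i, (if ε i then a i else -a i))
          ≤ 2 ^ m * Real.exp (L / 2) := by
      intro a ha
      refine le_trans (mgf_bound' a l) ?_
      apply mul_le_mul_of_nonneg_left _ (by positivity)
      apply Real.exp_le_exp.mpr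
      have h2 : l ^ 2 * (∑ i, a i ^ 2) ≤ l ^ 2 * S2 :=
        mul_le_mul_of_nonneg_left ha (sq_nonneg l)
      rw [hl2] at h2
      linarith
    -- bound on the exponential moment of the max
    have expsum : ∑ ε : Fin m → Bool,
        Real.exp (l * linfNorm M (∑ i, if ε i then x i else -x i))
          ≤ (2 * M) * (2 ^ m * Real.exp (L / 2)) := by
      have step1 : ∀ ε : Fin m → Bool,
          Real.exp (l * linfNorm M (∑ i, if ε i then x i else -x i))
            ≤ ∑ j : Fin M,
                (Real.exp (l * ∑ i, (if ε i then x i j else -(x i j)))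
                  + Real.exp (l * ∑ i, (if ε i then -(x i j) else -(-(x i j))))) := by
        intro ε
        obtain ⟨j, hj⟩ := exists_linf_eq' hM (∑ i, if ε i then x i else -x i)
        have happ := sum_vec_apply x ε j
        have hneg : (∑ i, (if ε i then -(x i j) else -(-(x i j))))
            = -(∑ i, (if ε i then x i j else -(x i j))) := by
          rw [← Finset.sum_neg_distrib]
          exact Finset.sum_congr rfl (fun i _ => by split <;> ring)
        have hsingle : Real.exp (l * linfNorm M (∑ i, if ε i then x i else -x i))
            ≤ Real.exp (l * ∑ i, (if ε i then x i j else -(x i j)))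
              + Real.exp (l * ∑ i, (if ε i then -(x i j) else -(-(x i j)))) := by
          rw [hj, happ, hneg]
          rcases abs_cases (∑ i, (if ε i then x i j else -(x i j))) with ⟨he, _⟩ | ⟨he, _⟩ <;>
            rw [he] <;>
            [skip; rw [show l * -(∑ i, (if ε i then x i j else -(x i j)))
              = l * -(∑ i, (if ε i then x i j else -(x i j))) from rfl]] <;>
            nlinarith [Real.exp_pos (l * ∑ i, (if ε i then x i j else -(x i j))),
              Real.exp_pos (l * -(∑ i, (if ε i then x i j else -(x i j)))),
              Real.exp_pos (-(l * ∑ i, (if ε i then x i j else -(x i j))))]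
        refine le_trans hsingle ?_
        apply Finset.single_le_sum (f := fun j => Real.exp (l * ∑ i, (if ε i then x i j else -(x i j)))
          + Real.exp (l * ∑ i, (if ε i then -(x i j) else -(-(x i j)))))
          (fun j _ => by positivity) (Finset.mem_univ j)
      calc ∑ ε : Fin m → Bool, Real.exp (l * linfNorm M (∑ i, if ε i then x i else -x i))
          ≤ ∑ ε : Fin m → Bool, ∑ j : Fin M,
              (Real.exp (l * ∑ i, (if ε i then x i j else -(x i j)))
                + Real.exp (l * ∑ i, (if ε i then -(x i j) else -(-(x i j))))) :=
            Finset.sum_le_sum (fun ε _ => step1 ε)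
        _ = ∑ j : Fin M, ∑ ε : Fin m → Bool,
              (Real.exp (l * ∑ i, (if ε i then x i j else -(x i j)))
                + Real.exp (l * ∑ i, (if ε i then -(x i j) else -(-(x i j))))) :=
            Finset.sum_comm
        _ = ∑ j : Fin M,
              ((∑ ε : Fin m → Bool, Real.exp (l * ∑ i, (if ε i then x i j else -(x i j))))
                + ∑ ε : Fin m → Bool, Real.exp (l * ∑ i, (if ε i then -(x i j) else -(-(x i j))))) := by
            exact Finset.sum_congr rfl (fun j _ => Finset.sum_add_distrib)
        _ ≤ ∑ j : Fin M, (2 ^ m * Real.exp (L / 2) + 2 ^ m * Real.exp (L / 2)) := by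
            apply Finset.sum_le_sum
            intro j _
            have hb : ∑ i, (-(x i j)) ^ 2 ≤ S2 := by
              have : ∑ i, (-(x i j)) ^ 2 = ∑ i, (x i j) ^ 2 := by
                exact Finset.sum_congr rfl (fun i _ => by ring)
              rw [this]; exact hsigj j
            exact add_le_add (hmge (fun i => x i j) (hsigj j)) (hmge (fun i => -(x i j)) hb)
        _ = (2 * M) * (2 ^ m * Real.exp (L / 2)) := by
            rw [Finset.sum_const, Finset.card_univ, Fintype.card_fin]
            push_cast
            ring
    -- put it together
    have hcard : (Finset.univ : Finset (Fin m → Bool)).card = 2 ^ m := by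
      simp
    have chain : ((2:ℝ) ^ m)⁻¹ *
        ∑ ε : Fin m → Bool, linfNorm M (∑ i, if ε i then x i else -x i) ^ 2
          ≤ t + 8 * M * S2 * Real.exp (L / 2 - 2 * L) := by
      have hsum1 : ∑ ε : Fin m → Bool, linfNorm M (∑ i, if ε i then x i else -x i) ^ 2
          ≤ 2 ^ m * t + 4 * S2 * Real.exp (-(2 * L)) *
              ∑ ε : Fin m → Bool, Real.exp (l * linfNorm M (∑ i, if ε i then x i else -x i)) := by
        calc ∑ ε : Fin m → Bool, linfNorm M (∑ i, if ε i then x i else -x i) ^ 2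
            ≤ ∑ ε : Fin m → Bool, (t + 4 * S2 * Real.exp
                (l * linfNorm M (∑ i, if ε i then x i else -x i) - 2 * L)) :=
              Finset.sum_le_sum (fun ε _ => main ε)
          _ = 2 ^ m * t + 4 * S2 * Real.exp (-(2 * L)) *
              ∑ ε : Fin m → Bool, Real.exp (l * linfNorm M (∑ i, if ε i then x i else -x i)) := by
              rw [Finset.sum_add_distrib, Finset.sum_const, hcard, nsmul_eq_mul,
                Nat.cast_pow, Nat.cast_ofNat]
              congr 1
              rw [show (4 * S2 * Real.exp (-(2 * L))) *
                    (∑ ε : Fin m → Bool,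
                      Real.exp (l * linfNorm M (∑ i, if ε i then x i else -x i)))
                  = ∑ ε : Fin m → Bool, (4 * S2 * Real.exp (-(2 * L))) *
                      Real.exp (l * linfNorm M (∑ i, if ε i then x i else -x i))
                  from Finset.mul_sum _ _ _]
              apply Finset.sum_congr rfl
              intro ε _
              rw [show l * linfNorm M (∑ i, if ε i then x i else -x i) - 2 * L
                  = (l * linfNorm M (∑ i, if ε i then x i else -x i)) + (-(2*L)) by ring,
                Real.exp_add]
              ring
      have hsum2 : 2 ^ m * t + 4 * S2 * Real.exp (-(2 * L)) *
          ∑ ε : Fin m → Bool, Real.exp (l * linfNorm M (∑ i, if ε i then x i else -x i))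
            ≤ 2 ^ m * t + 4 * S2 * Real.exp (-(2 * L)) * ((2 * M) * (2 ^ m * Real.exp (L / 2))) := by
        have hco : 0 ≤ 4 * S2 * Real.exp (-(2 * L)) := by positivity
        exact add_le_add le_rfl (mul_le_mul_of_nonneg_left expsum hco)
      have hpow : (0:ℝ) < 2 ^ m := by positivity
      calc ((2:ℝ) ^ m)⁻¹ *
          ∑ ε : Fin m → Bool, linfNorm M (∑ i, if ε i then x i else -x i) ^ 2
            ≤ ((2:ℝ) ^ m)⁻¹ * (2 ^ m * t + 4 * S2 * Real.exp (-(2 * L)) *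
                ((2 * M) * (2 ^ m * Real.exp (L / 2)))) := by
              apply mul_le_mul_of_nonneg_left (le_trans hsum1 hsum2) (by positivity)
        _ = t + 8 * M * S2 * Real.exp (L / 2 - 2 * L) := by
              rw [show Real.exp (L / 2 - 2 * L) = Real.exp (-(2*L)) * Real.exp (L/2) by
                rw [← Real.exp_add]; congr 1; ring]
              field_simp
              ring
    have hMexp : 8 * (M:ℝ) * S2 * Real.exp (L / 2 - 2 * L) ≤ 8 * S2 := by
      have h1 : Real.exp (L / 2 - 2 * L) ≤ Real.exp (-L) := by
        apply Real.exp_le_exp.mpr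
        linarith
      have h2 : Real.exp (-L) = ((M:ℝ) + 1)⁻¹ := by
        rw [Real.exp_neg, hexpL]
      have h3 : (M:ℝ) * Real.exp (-L) ≤ 1 := by
        rw [h2]
        rw [mul_inv_le_iff₀ (by linarith)]
        linarith
      have h4 : (M:ℝ) * Real.exp (L / 2 - 2 * L) ≤ 1 := by
        calc (M:ℝ) * Real.exp (L / 2 - 2 * L) ≤ (M:ℝ) * Real.exp (-L) :=
              mul_le_mul_of_nonneg_left h1 (by positivity)
          _ ≤ 1 := h3
      nlinarith [hS2pos, h4]
    have hkey : (4 * L + 8) * Real.log 2 ≤ 16 * L := by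
      nlinarith [Real.log_two_lt_d9, Real.log_two_gt_d9, hlog2, hLpos]
    have hfinal : t + 8 * S2 ≤ 4 ^ 2 * Real.logb 2 ((M:ℝ) + 1) * S2 := by
      rw [Real.logb, ← hLdef, htdef]
      rw [show (4:ℝ)^2 * (L / Real.log 2) * S2 = (16 * L * S2) / Real.log 2 by ring,
        le_div_iff₀ hlog2pos]
      nlinarith [mul_le_mul_of_nonneg_right hkey hS2nn]
    calc ((2:ℝ) ^ m)⁻¹ *
        ∑ ε : Fin m → Bool, linfNorm M (∑ i, if ε i then x i else -x i) ^ 2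
          ≤ t + 8 * M * S2 * Real.exp (L / 2 - 2 * L) := chain
      _ ≤ t + 8 * S2 := by linarith
      _ ≤ 4 ^ 2 * Real.logb 2 ((M:ℝ) + 1) * S2 := hfinal
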